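/- arXiv:1712.05715 — 3 statements merged into one kernel-verified Lean document; each statement's English description precedes it below -/
import Mathlib

section
/- Let V⁺ = [[0,0,0,0],[0,0,0,0],[−1,1,0,0],[0,−1,0,0]] and V⁻ = [[0,1,0,1],[−1,0,0,0],[−1,1,0,1],[−1,−1,−1,0]] be the 4×4 integer Seifert matrices of the almost classical knot 5.2025. Then det(t·V⁺ − (V⁺)ᵀ) = t² and det(t·V⁻ − (V⁻)ᵀ) = t² in the polynomial ring ℤ[t]; equivalently, both directed Alexander–Conway polynomials of 5.2025 (for this Seifert surface) satisfy ∇⁺(t) = 1 and ∇⁻(t) = 1. -/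
open Polynomial Matrix

/-- The Seifert matrices of the almost classical knot 5.2025, regarded as matrices
over `ℤ[X]` via the canonical inclusion `ℤ → ℤ[X]`. -/
noncomputable def V52025plus : Matrix (Fin 4) (Fin 4) (Polynomial ℤ) :=
  !![0, 0, 0, 0; 0, 0, 0, 0; -1, 1, 0, 0; 0, -1, 0, 0]

noncomputable def V52025minus : Matrix (Fin 4) (Fin 4) (Polynomial ℤ) :=
  !![0, 1, 0, 1; -1, 0, 0, 0; -1, 1, 0, 1; -1, -1, -1, 0]

private lemma my_det_fin_four {R : Type*} [CommRing R] (M : Matrix (Fin 4) (Fin 4) R) :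
    M.det =
      M 0 0 * (M 1 1 * (M 2 2 * M 3 3 - M 2 3 * M 3 2) -
        M 1 2 * (M 2 1 * M 3 3 - M 2 3 * M 3 1) + M 1 3 * (M 2 1 * M 3 2 - M 2 2 * M 3 1)) -
      M 0 1 * (M 1 0 * (M 2 2 * M 3 3 - M 2 3 * M 3 2) -
        M 1 2 * (M 2 0 * M 3 3 - M 2 3 * M 3 0) + M 1 3 * (M 2 0 * M 3 2 - M 2 2 * M 3 0)) +
      M 0 2 * (M 1 0 * (M 2 1 * M 3 3 - M 2 3 * M 3 1) -
        M 1 1 * (M 2 0 * M 3 3 - M 2 3 * M 3 0) + M 1 3 * (M 2 0 * M 3 1 - M 2 1 * M 3 0)) -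
      M 0 3 * (M 1 0 * (M 2 1 * M 3 2 - M 2 2 * M 3 1) -
        M 1 1 * (M 2 0 * M 3 2 - M 2 2 * M 3 0) + M 1 2 * (M 2 0 * M 3 1 - M 2 1 * M 3 0)) := by
  simp [Matrix.det_succ_row_zero, Fin.sum_univ_succ]
  simp [Fin.succAbove, Fin.lt_def]
  ring

/-- det(t·V⁺ − (V⁺)ᵀ) = t² and det(t·V⁻ − (V⁻)ᵀ) = t² in ℤ[t], i.e. both directed
Alexander–Conway polynomials of 5.2025 (for this Seifert surface) equal 1. -/
theorem directed_alexander_conway_5pt2025 :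
    ((Polynomial.X : Polynomial ℤ) • V52025plus - V52025plusᵀ).det = Polynomial.X ^ 2 ∧
    ((Polynomial.X : Polynomial ℤ) • V52025minus - V52025minusᵀ).det = Polynomial.X ^ 2 := by
  constructor
  · have hT : V52025plusᵀ = !![0,0,-1,0; 0,0,1,-1; 0,0,0,0; 0,0,0,0] := by
      ext i j; fin_cases i <;> fin_cases j <;> simp [V52025plus]
    rw [hT, my_det_fin_four]
    norm_num [V52025plus, Matrix.sub_apply, Matrix.smul_apply, Matrix.transpose_apply,
      Matrix.cons_val_zero, Matrix.cons_val_one, Matrix.head_cons, Matrix.cons_val_two,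
      Matrix.tail_cons, Matrix.cons_val_three, Matrix.vecHead, Matrix.vecTail]
    ring
  · have hT : V52025minusᵀ = !![0,-1,-1,-1; 1,0,1,-1; 0,0,0,-1; 1,0,1,0] := by
      ext i j; fin_cases i <;> fin_cases j <;> simp [V52025minus]
    rw [hT, my_det_fin_four]
    norm_num [V52025minus, Matrix.sub_apply, Matrix.smul_apply, Matrix.transpose_apply,
      Matrix.cons_val_zero, Matrix.cons_val_one, Matrix.head_cons, Matrix.cons_val_two,
      Matrix.tail_cons, Matrix.cons_val_three, Matrix.vecHead, Matrix.vecTail]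
    ring
end

section
/- There is no polynomial f ∈ ℤ[t] such that 3 − t − t⁻¹ = f(t)·f(t⁻¹) in the Laurent polynomial ring ℤ[t,t⁻¹]. (This is the algebraic fact from which the paper concludes that the almost classical knot 6.87548, whose directed Alexander–Conway polynomial is ∇⁻(t) = 3 − t − t⁻¹, is not slice.) -/
open Polynomial LaurentPolynomial

noncomputable def evalNegOne : LaurentPolynomial ℤ →ₐ[ℤ] ℤ :=
  AddMonoidAlgebra.lift ℤ ℤ ℤ ((Units.coeHom ℤ).comp (zpowersHom ℤˣ (-1)))

lemma evalNegOne_T (n : ℤ) : evalNegOne (T n) = ((-1 : ℤˣ) ^ n : ℤˣ) := by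
  unfold evalNegOne T
  rw [AddMonoidAlgebra.lift_single]
  simp

lemma evalNegOne_toLaurent (f : Polynomial ℤ) :
    evalNegOne (toLaurent f) = f.eval (-1) := by
  have : (evalNegOne.toRingHom.comp Polynomial.toLaurent : Polynomial ℤ →+* ℤ)
      = evalRingHom (-1) := by
    apply Polynomial.ringHom_ext
    · intro a
      simp [Polynomial.toLaurent_C, LaurentPolynomial.C_eq_algebraMap]
    · simp only [RingHom.coe_comp, Function.comp_apply, Polynomial.toLaurent_X]
      rw [show (evalNegOne.toRingHom (T 1) : ℤ) = evalNegOne (T 1) from rfl, evalNegOne_T]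
      simp
  have h := congrFun (congrArg (fun g : Polynomial ℤ →+* ℤ => (g : Polynomial ℤ → ℤ)) this) f
  simpa using h

lemma evalNegOne_Tn1 : evalNegOne (T (-1)) = -1 := by
  rw [evalNegOne_T]; simp

/-- There is no polynomial f ∈ ℤ[t] such that 3 − t − t⁻¹ = f(t)·f(t⁻¹) in the
Laurent polynomial ring ℤ[t,t⁻¹].  Here f(t) is the image of f under the canonical
inclusion ℤ[t] → ℤ[t,t⁻¹] and f(t⁻¹) is the image of f under the ring homomorphism
ℤ[t] → ℤ[t,t⁻¹] sending t to t⁻¹.  This is the algebraic fact from which the paper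
concludes that the almost classical knot 6.87548 is not slice. -/
theorem no_fischer_factorization_6pt87548 :
    ¬ ∃ f : Polynomial ℤ,
      (3 : LaurentPolynomial ℤ) - LaurentPolynomial.T 1 - LaurentPolynomial.T (-1) =
        (Polynomial.toLaurent f) *
          (Polynomial.aeval (LaurentPolynomial.T (-1) : LaurentPolynomial ℤ) f) := by
  rintro ⟨f, hf⟩
  have h := congrArg evalNegOne hf
  rw [map_sub, map_sub, map_mul, evalNegOne_toLaurent, map_ofNat,
    ← Polynomial.aeval_algHom_apply, evalNegOne_Tn1, evalNegOne_T] at h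
  simp only [zpow_one, Units.val_neg, Units.val_one] at h
  rw [show Polynomial.aeval (-1 : ℤ) f = f.eval (-1) by rw [Polynomial.coe_aeval_eq_eval]] at h
  set a := f.eval (-1) with ha
  have h5 : a * a = 5 := by linarith
  have had : a ∣ 5 := ⟨a, h5.symm⟩
  have h1 : a ≤ 5 := Int.le_of_dvd (by norm_num) had
  have h2 : -5 ≤ a := by
    have : -a ∣ 5 := had.neg_left
    have := Int.le_of_dvd (by norm_num) this
    omega
  interval_cases a <;> omega
end

section
/- Let V⁺ = [[1,0],[0,−1]] and V⁻ = [[1,1],[−1,−1]] be the 2×2 integer Seifert matrices of the almost classical knot 4.99, regarded as complex matrices. For every complex number ω with |ω| = 1 and ω ≠ 1, and for V equal to either V⁺ or V⁻, the 2×2 complex matrix W = (1−ω)·V + (1−ω̄)·Vᵀ is Hermitian, has trace 0, and its determinant is a real number strictly less than 0; consequently W has one strictly positive and one strictly negative eigenvalue, so the directed signatures σ̂±_ω(𝒦,F) = sig((1−ω)V^± + (1−ω̄)(V^±)ᵀ) of 4.99 vanish for all ω ∈ S¹ \ {1}. -/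
open Matrix Complex

/-- The Seifert matrices of the almost classical knot 4.99, regarded as complex
matrices. -/
noncomputable def V499plusC : Matrix (Fin 2) (Fin 2) ℂ := !![1, 0; 0, -1]

noncomputable def V499minusC : Matrix (Fin 2) (Fin 2) ℂ := !![1, 1; -1, -1]

lemma trace_eq_sum_eig {n : Type*} [Fintype n] [DecidableEq n]
    {A : Matrix n n ℂ} (hA : A.IsHermitian) :
    A.trace = ∑ i, (hA.eigenvalues i : ℂ) := by
  conv_lhs => rw [hA.spectral_theorem]
  rw [Unitary.conjStarAlgAut_apply, Matrix.trace_mul_cycle]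
  rw [show (star (hA.eigenvectorUnitary : Matrix n n ℂ)) *
        (hA.eigenvectorUnitary : Matrix n n ℂ) = 1 from
      Matrix.mem_unitaryGroup_iff'.mp hA.eigenvectorUnitary.2, one_mul]
  simp [Matrix.trace_diagonal]

lemma eig_aux (W : Matrix (Fin 2) (Fin 2) ℂ) (hW : W.IsHermitian)
    (htr : W.trace = 0) (hdet : W.det.re < 0) :
    ∃ i j : Fin 2, 0 < hW.eigenvalues i ∧ hW.eigenvalues j < 0 := by
  have hsum := trace_eq_sum_eig hW
  have hprod := hW.det_eq_prod_eigenvalues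
  rw [Fin.sum_univ_two] at hsum
  rw [Fin.prod_univ_two] at hprod
  set e0 := hW.eigenvalues 0 with he0
  set e1 := hW.eigenvalues 1 with he1
  have h1 : e0 + e1 = 0 := by
    have : ((e0 + e1 : ℝ) : ℂ) = 0 := by rw [Complex.ofReal_add, ← hsum, htr]
    exact_mod_cast this
  have h2 : e0 * e1 < 0 := by
    have hd := hdet
    rw [hprod] at hd
    simpa using hd
  rcases lt_trichotomy e0 0 with h | h | h
  · exact ⟨1, 0, by nlinarith, h⟩
  · exact absurd h2 (by simp [h])
  · exact ⟨0, 1, h, by nlinarith⟩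

lemma herm_aux (t q : ℂ) (ht : starRingEnd ℂ t = t) :
    (!![t, q; starRingEnd ℂ q, -t]).IsHermitian := by
  ext i j
  fin_cases i <;> fin_cases j <;>
    simp [Matrix.conjTranspose_apply, ht, Complex.conj_conj, map_neg]

/-- For every unit complex number ω ≠ 1 and V ∈ {V⁺, V⁻} of the knot 4.99, the
matrix W = (1−ω)·V + (1−ω̄)·Vᵀ is Hermitian, has trace 0, and has determinant a
real number strictly less than 0; consequently W has one strictly positive and one
strictly negative eigenvalue, so the directed signatures σ̂±_ω(𝒦,F) of 4.99
vanish for all ω ∈ S¹ \ {1}. -/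
theorem directed_signatures_4pt99_vanish
    (ω : ℂ) (hω : ‖ω‖ = 1) (hω1 : ω ≠ 1)
    (V : Matrix (Fin 2) (Fin 2) ℂ) (hV : V = V499plusC ∨ V = V499minusC) :
    ∃ hW : ((1 - ω) • V + (1 - starRingEnd ℂ ω) • Vᵀ).IsHermitian,
      ((1 - ω) • V + (1 - starRingEnd ℂ ω) • Vᵀ).trace = 0 ∧
      ((1 - ω) • V + (1 - starRingEnd ℂ ω) • Vᵀ).det.im = 0 ∧
      ((1 - ω) • V + (1 - starRingEnd ℂ ω) • Vᵀ).det.re < 0 ∧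
      ∃ i j : Fin 2, 0 < hW.eigenvalues i ∧ hW.eigenvalues j < 0 := by
  have hrs : ω.re ^ 2 + ω.im ^ 2 = 1 := by
    have h := Complex.normSq_eq_norm_sq ω
    rw [hω] at h
    rw [Complex.normSq_apply] at h
    nlinarith [h]
  have hr1 : ω.re < 1 := by
    have hle : ω.re ≤ 1 := by
      calc ω.re ≤ |ω.re| := le_abs_self _
        _ ≤ ‖ω‖ := Complex.abs_re_le_norm ω
        _ = 1 := by rw [hω]
    rcases lt_or_eq_of_le hle with h | h
    · exact h
    · exfalso; apply hω1
      have him : ω.im = 0 := by nlinarith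
      exact Complex.ext h him
  -- explicit form of W in each case
  have hWexp : (1 - ω) • V + (1 - starRingEnd ℂ ω) • Vᵀ =
      !![2 - ω - starRingEnd ℂ ω, 0;
         starRingEnd ℂ 0, -(2 - ω - starRingEnd ℂ ω)] ∨
      (1 - ω) • V + (1 - starRingEnd ℂ ω) • Vᵀ =
      !![2 - ω - starRingEnd ℂ ω, starRingEnd ℂ ω - ω;
         starRingEnd ℂ (starRingEnd ℂ ω - ω), -(2 - ω - starRingEnd ℂ ω)] := by
    have htp : V499plusCᵀ = !![(1:ℂ), 0; 0, -1] := by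
      ext i j; fin_cases i <;> fin_cases j <;> simp [V499plusC]
    have htm : V499minusCᵀ = !![(1:ℂ), -1; 1, -1] := by
      ext i j; fin_cases i <;> fin_cases j <;> simp [V499minusC]
    rcases hV with h | h <;> subst h <;> [left; right] <;>
      simp only [htp, htm]
    all_goals
      ext i j
      fin_cases i <;> fin_cases j <;>
        simp [V499plusC, V499minusC, Matrix.smul_apply, Matrix.add_apply] <;> ring
  have ht : starRingEnd ℂ (2 - ω - starRingEnd ℂ ω) = 2 - ω - starRingEnd ℂ ω := by
    rw [map_sub, map_sub, Complex.conj_conj, map_ofNat]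
    ring
  rcases hWexp with hWe | hWe <;> rw [hWe] <;>
    refine ⟨herm_aux _ _ ht, ?_, ?_, ?_, eig_aux _ (herm_aux _ _ ht) ?_ ?_⟩
  all_goals
    try (rw [Matrix.trace_fin_two_of]; ring)
  all_goals
    rw [Matrix.det_fin_two_of]
    simp [Complex.mul_im, Complex.mul_re, Complex.sub_re, Complex.sub_im,
      Complex.conj_re, Complex.conj_im]
  all_goals
    nlinarith [hrs, hr1, mul_pos (sub_pos.2 hr1) (sub_pos.2 hr1), sq_nonneg ω.im]
end
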